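/- Let u : Ω → ℂ be a C² function on an open set Ω ⊆ ℝ³ and k ∈ ℂ. Define the Clifford-algebra-valued field F = iku + ∇u (scalar part iku, vector part ∇u, zero bivector and 3-vector parts). Then DF = ikF (where D is the Hodge–Dirac operator, nabla acting via Clifford multiplication) if and only if Δu + k²u = 0. -/

import Mathlib

noncomputable section

/-- Complex Euclidean dot product (bilinear extension) on `ℂ³`. -/
def cdot (u v : Fin 3 → ℂ) : ℂ := u 0 * v 0 + u 1 * v 1 + u 2 * v 2

/-- Bilinear extension of the cross product to `ℂ³`. -/
def ccross (u v : Fin 3 → ℂ) : Fin 3 → ℂ :=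
  ![u 1 * v 2 - u 2 * v 1, u 2 * v 0 - u 0 * v 2, u 0 * v 1 - u 1 * v 0]

/-- The eight-dimensional complex Clifford algebra `Cl(ℂ³)` of `ℝ³`, identified
as a linear space with `∧ℂ³`: a multivector is `w = α + a + *b + *β` with
scalar part `α`, vector part `a`, bivector part `*b` and 3-vector part `*β`. -/
structure Cl3 where
  α : ℂ
  a : Fin 3 → ℂ
  b : Fin 3 → ℂ
  β : ℂ

instance : Zero Cl3 := ⟨⟨0, 0, 0, 0⟩⟩
instance : One Cl3 := ⟨⟨1, 0, 0, 0⟩⟩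
instance : Add Cl3 := ⟨fun x y => ⟨x.α + y.α, x.a + y.a, x.b + y.b, x.β + y.β⟩⟩
instance : Neg Cl3 := ⟨fun x => ⟨-x.α, -x.a, -x.b, -x.β⟩⟩
instance : Sub Cl3 := ⟨fun x y => x + -y⟩
instance : SMul ℂ Cl3 := ⟨fun c x => ⟨c * x.α, c • x.a, c • x.b, c * x.β⟩⟩

/-- The Clifford product on `∧ℂ³`, with the convention `u u = |u|²` for
vectors `u`.  It is determined by the product of a vector with a multivector,
`u w = u·a + (uα − u×b) + *(u×a + uβ) + *(u·b)` for `w = α + a + *b + *β`. -/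
instance : Mul Cl3 := ⟨fun x y =>
  ⟨x.α * y.α + cdot x.a y.a - cdot x.b y.b - x.β * y.β,
   x.α • y.a + y.α • x.a - ccross x.a y.b - ccross x.b y.a - y.β • x.b - x.β • y.b,
   x.α • y.b + y.α • x.b + ccross x.a y.a - ccross x.b y.b + x.β • y.a + y.β • x.a,
   x.α * y.β + x.β * y.α + cdot x.a y.b + cdot x.b y.a⟩⟩

/-- The embedding of real vectors `ℝ³ ⊂ Cl(ℂ³)`. -/
def vec (u : Fin 3 → ℝ) : Cl3 := ⟨0, fun i => (u i : ℂ), 0, 0⟩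

/-- The grade involution `ŵ`: negation of the vector (degree-1) and 3-vector
(degree-3) parts. -/
def gradeInv (w : Cl3) : Cl3 := ⟨w.α, -w.a, w.b, -w.β⟩

/-- Exterior product of a complex vector with a multivector:
`u ∧ w = uα + *(u×a) + *(u·b)` for `w = α + a + *b + *β`. -/
def wedgeC (u : Fin 3 → ℂ) (w : Cl3) : Cl3 := ⟨0, w.α • u, ccross u w.a, cdot u w.b⟩

/-- Exterior product of a real vector with a multivector. -/
def wedgeVec (u : Fin 3 → ℝ) (w : Cl3) : Cl3 := wedgeC (fun i => (u i : ℂ)) w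

/-- Partial derivative `∂ᵢ f` of a complex-valued function on `ℝ³`. -/
def pdC (i : Fin 3) (f : (Fin 3 → ℝ) → ℂ) (x : Fin 3 → ℝ) : ℂ :=
  fderiv ℝ f x (Pi.single i 1)

/-- Componentwise partial derivative `∂ᵢ F` of a multivector field. -/
def pdCl (i : Fin 3) (F : (Fin 3 → ℝ) → Cl3) (x : Fin 3 → ℝ) : Cl3 :=
  ⟨pdC i (fun y => (F y).α) x, fun j => pdC i (fun y => (F y).a j) x,
   fun j => pdC i (fun y => (F y).b j) x, pdC i (fun y => (F y).β) x⟩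

/-- The standard basis vector `eᵢ` of `ℝ³`. -/
def basisVec (i : Fin 3) : Fin 3 → ℝ := Pi.single i 1

/-- The Hodge–Dirac operator `D F = e₁ ∂₁F + e₂ ∂₂F + e₃ ∂₃F`, the nabla
symbol acting via the Clifford product. -/
def Dirac (F : (Fin 3 → ℝ) → Cl3) (x : Fin 3 → ℝ) : Cl3 :=
  vec (basisVec 0) * pdCl 0 F x + vec (basisVec 1) * pdCl 1 F x
    + vec (basisVec 2) * pdCl 2 F x

/-- The exterior derivative `d F = e₁ ∧ ∂₁F + e₂ ∧ ∂₂F + e₃ ∧ ∂₃F`, the nabla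
symbol acting via the exterior product. -/
def extDerivCl (F : (Fin 3 → ℝ) → Cl3) (x : Fin 3 → ℝ) : Cl3 :=
  wedgeVec (basisVec 0) (pdCl 0 F x) + wedgeVec (basisVec 1) (pdCl 1 F x)
    + wedgeVec (basisVec 2) (pdCl 2 F x)

/-- Divergence `∇·v` of a complex vector field on `ℝ³`. -/
def divC (v : (Fin 3 → ℝ) → Fin 3 → ℂ) (x : Fin 3 → ℝ) : ℂ :=
  pdC 0 (fun y => v y 0) x + pdC 1 (fun y => v y 1) x + pdC 2 (fun y => v y 2) x

/-- Curl `∇×v` of a complex vector field on `ℝ³`. -/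
def curlC (v : (Fin 3 → ℝ) → Fin 3 → ℂ) (x : Fin 3 → ℝ) : Fin 3 → ℂ :=
  ![pdC 1 (fun y => v y 2) x - pdC 2 (fun y => v y 1) x,
    pdC 2 (fun y => v y 0) x - pdC 0 (fun y => v y 2) x,
    pdC 0 (fun y => v y 1) x - pdC 1 (fun y => v y 0) x]

/-- Gradient `∇f` of a complex-valued function on `ℝ³`. -/
def gradC (f : (Fin 3 → ℝ) → ℂ) (x : Fin 3 → ℝ) : Fin 3 → ℂ :=
  fun i => pdC i f x

lemma Cl3_mul_def (x y : Cl3) : x * y =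
  ⟨x.α * y.α + cdot x.a y.a - cdot x.b y.b - x.β * y.β,
   x.α • y.a + y.α • x.a - ccross x.a y.b - ccross x.b y.a - y.β • x.b - x.β • y.b,
   x.α • y.b + y.α • x.b + ccross x.a y.a - ccross x.b y.b + x.β • y.a + y.β • x.a,
   x.α * y.β + x.β * y.α + cdot x.a y.b + cdot x.b y.a⟩ := rfl

lemma Cl3_add_def (x y : Cl3) : x + y = ⟨x.α + y.α, x.a + y.a, x.b + y.b, x.β + y.β⟩ := rfl

lemma Cl3_smul_def (c : ℂ) (x : Cl3) : c • x = ⟨c * x.α, c • x.a, c • x.b, c * x.β⟩ := rfl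

lemma pdC_zero {x : Fin 3 → ℝ} (i : Fin 3) : pdC i (fun _ => (0:ℂ)) x = 0 := by
  simp [pdC]

lemma pdC_const_mul {u : (Fin 3 → ℝ) → ℂ} {x : Fin 3 → ℝ} (c : ℂ)
    (hd : DifferentiableAt ℝ u x) (i : Fin 3) :
    pdC i (fun y => c * u y) x = c * pdC i u x := by
  simp only [pdC]
  rw [fderiv_const_mul hd]; simp

lemma pdC_second {u : (Fin 3 → ℝ) → ℂ} {x : Fin 3 → ℝ} (h2 : ContDiffAt ℝ 2 u x) (i j : Fin 3) :
    pdC i (fun y => pdC j u y) x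
      = fderiv ℝ (fderiv ℝ u) x (Pi.single i 1) (Pi.single j 1) := by
  have hd : DifferentiableAt ℝ (fderiv ℝ u) x :=
    (h2.fderiv_right (m := 1) (by norm_num)).differentiableAt one_ne_zero
  simp only [pdC]
  rw [fderiv_clm_apply hd (differentiableAt_const _)]
  simp

lemma pdC_symm {u : (Fin 3 → ℝ) → ℂ} {x : Fin 3 → ℝ} (h2 : ContDiffAt ℝ 2 u x) (i j : Fin 3) :
    pdC i (fun y => pdC j u y) x = pdC j (fun y => pdC i u y) x := by
  rw [pdC_second h2, pdC_second h2]
  exact (h2.isSymmSndFDerivAt (by simp)) _ _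

/-- For a `C²` function `u : Ω → ℂ` on an open `Ω ⊆ ℝ³` and `k ∈ ℂ`, the
multivector field `F = iku + ∇u` satisfies `D F = ik F` on `Ω` if and only if
`Δu + k²u = 0` on `Ω`. -/
theorem helmholtz_iff_dirac (Ω : Set (Fin 3 → ℝ)) (hΩ : IsOpen Ω) (k : ℂ)
    (u : (Fin 3 → ℝ) → ℂ) (hu : ∀ x ∈ Ω, ContDiffAt ℝ 2 u x) :
    (∀ x ∈ Ω, Dirac (fun y => (⟨Complex.I * k * u y, gradC u y, 0, 0⟩ : Cl3)) x
        = (Complex.I * k) • (⟨Complex.I * k * u x, gradC u x, 0, 0⟩ : Cl3)) ↔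
    (∀ x ∈ Ω, (pdC 0 (fun y => pdC 0 u y) x + pdC 1 (fun y => pdC 1 u y) x
        + pdC 2 (fun y => pdC 2 u y) x) + k ^ 2 * u x = 0) := by
  refine forall₂_congr fun x hx => ?_
  have h2 := hu x hx
  have hd : DifferentiableAt ℝ u x := h2.differentiableAt (by norm_num)
  simp only [Dirac, pdCl, gradC, vec, basisVec, Cl3_mul_def, Cl3_add_def, Cl3_smul_def,
    cdot, ccross, Cl3.mk.injEq, pdC_zero, pdC_const_mul _ hd, Pi.single_apply]
  simp [funext_iff, Fin.forall_fin_succ, Pi.single_apply, pdC_zero, Matrix.vecHead,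
    Matrix.vecTail, gradC]
  constructor
  · rintro ⟨h1, -⟩
    linear_combination h1 + k ^ 2 * u x * Complex.I_sq
  · intro h
    exact ⟨by linear_combination h - k ^ 2 * u x * Complex.I_sq,
      by rw [pdC_symm h2 1 2]; ring, by rw [pdC_symm h2 0 2]; ring,
      by rw [pdC_symm h2 0 1]; ring⟩
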